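/- Suppose f(x) = (1/n) Σ_{i=1}^n f_i(x) is β-smooth and μ-PL with β ≥ μ > 0, each f_i is differentiable with ‖∇f_i(x)‖ ≤ σ for all i and x, and p < 1. Consider the iteration x_{t+1} = x_t - γ ĝ(x_t) with step size γ = (1-p)/β, where ĝ(x) = g(x)/(1-p), g(x) = (1/n) Σ_{i=1}^{n/c} Y_i^{(t)} g[i](x), g[i](x) = Σ_{j=1}^c ∇f_{c(i-1)+j}(x), and at each iteration the block indicators Y^{(t)} are induced by an independent uniformly random r-subset of the k workers (partitioned into n/c blocks of size ℓ = kc/n, 2ℓ ≤ k). Then Δ_T := E[f(x_T) - f*] satisfies Δ_T ≤ (1 - (1-p)μ/β)^T Δ_0 + (q-p)cσ²/(2(1-p)μn). -/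

import Mathlib

open Finset

/-- The index `c*(i-1)+j` (0-indexed: `c*i + j`) of the `j`-th task in the `i`-th block. -/
def taskIdx (n c : ℕ) (hc : c ∣ n) (i : Fin (n / c)) (j : Fin c) : Fin n :=
  ⟨c * i.val + j.val, by
    calc c * i.val + j.val < c * i.val + c := Nat.add_lt_add_left j.isLt _
      _ = c * (i.val + 1) := (Nat.mul_succ c i.val).symm
      _ ≤ c * (n / c) := Nat.mul_le_mul (Nat.le_refl c) i.isLt
      _ = n := Nat.mul_div_cancel' hc⟩

/-- The trajectory obtained by starting at `x0` and, at step `t`, applying the update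
`upd (ω t)` determined by the non-straggler set `ω t` of that iteration. -/
def traj {k : ℕ} {E : Type*} (x0 : E) (upd : Finset (Fin k) → E → E)
    (ω : ℕ → Finset (Fin k)) : ℕ → E
  | 0 => x0
  | t + 1 => upd (ω t) (traj x0 upd ω t)

lemma traj_shift {k : ℕ} {E : Type*} (x0 : E) (upd : Finset (Fin k) → E → E)
    (ω : ℕ → Finset (Fin k)) (t : ℕ) :
    traj x0 upd ω (t + 1) = traj (upd (ω 0) x0) upd (fun s => ω (s + 1)) t := by
  induction t with
  | zero => rfl
  | succ t ih => show upd (ω (t+1)) (traj x0 upd ω (t+1)) = _; rw [ih]; rfl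

lemma traj_congr {k : ℕ} {E : Type*} (x0 : E) (upd : Finset (Fin k) → E → E)
    {ω ω' : ℕ → Finset (Fin k)} {t : ℕ} (h : ∀ s < t, ω s = ω' s) :
    traj x0 upd ω t = traj x0 upd ω' t := by
  induction t with
  | zero => rfl
  | succ t ih =>
      show upd (ω t) (traj x0 upd ω t) = upd (ω' t) (traj x0 upd ω' t)
      rw [h t (Nat.lt_succ_self t), ih (fun s hs => h s (Nat.lt_succ_of_lt hs))]

lemma sum_taskIdx {n c : ℕ} (hn : 0 < n) (hc : c ∣ n) {M : Type*} [AddCommMonoid M]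
    (g : Fin n → M) :
    ∑ i : Fin (n / c), ∑ j : Fin c, g (taskIdx n c hc i j) = ∑ m : Fin n, g m := by
  have hc0 : 0 < c := Nat.pos_of_dvd_of_pos hc hn
  have e1 : ∑ i : Fin (n / c), ∑ j : Fin c, g (taskIdx n c hc i j)
      = ∑ ij : Fin (n / c) × Fin c, g (taskIdx n c hc ij.1 ij.2) :=
    (Fintype.sum_prod_type (fun ij : Fin (n / c) × Fin c => g (taskIdx n c hc ij.1 ij.2))).symm
  rw [e1]
  apply Fintype.sum_bijective (fun ij : Fin (n / c) × Fin c => taskIdx n c hc ij.1 ij.2)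
  · rw [Fintype.bijective_iff_injective_and_card]
    constructor
    · rintro ⟨i, j⟩ ⟨i', j'⟩ h
      have h' : c * i.val + j.val = c * i'.val + j'.val := congrArg Fin.val h
      have hdiv : ∀ (a : ℕ) (b : Fin c), (c * a + b.val) / c = a := by
        intro a b
        rw [Nat.mul_add_div hc0, Nat.div_eq_of_lt b.isLt, Nat.add_zero]
      have hi : i.val = i'.val := by
        rw [← hdiv i.val j, ← hdiv i'.val j', h']
      rw [hi] at h'
      have hj : j.val = j'.val := by omega
      exact Prod.ext (Fin.ext hi) (Fin.ext hj)
    · simp [Nat.div_mul_cancel hc]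
  · intro ij; rfl

lemma card_filter_inter_empty {k r : ℕ} (W : Finset (Fin k)) :
    ({S ∈ Finset.powersetCard r (Finset.univ : Finset (Fin k)) | S ∩ W = ∅}).card
      = (k - W.card).choose r := by
  have h : {S ∈ Finset.powersetCard r (Finset.univ : Finset (Fin k)) | S ∩ W = ∅}
      = Finset.powersetCard r Wᶜ := by
    ext S
    simp only [Finset.mem_filter, Finset.mem_powersetCard, Finset.subset_univ, true_and]
    constructor
    · rintro ⟨hcard, hint⟩
      refine ⟨fun x hx => Finset.mem_compl.2 fun hxW => ?_, hcard⟩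
      · exact Finset.notMem_empty x (hint ▸ Finset.mem_inter.2 ⟨hx, hxW⟩)
    · rintro ⟨hsub, hcard⟩
      refine ⟨hcard, Finset.eq_empty_iff_forall_notMem.2 fun x hx => ?_⟩
      rcases Finset.mem_inter.1 hx with ⟨h1, h2⟩
      exact Finset.mem_compl.1 (hsub h1) h2
  rw [h, Finset.card_powersetCard, Finset.card_compl, Fintype.card_fin]

lemma sum_indicator_empty {k r : ℕ} (W : Finset (Fin k)) :
    ∑ S ∈ Finset.powersetCard r (Finset.univ : Finset (Fin k)),
        (if S ∩ W = ∅ then (1 : ℝ) else 0)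
      = ((k - W.card).choose r : ℝ) := by
  rw [Finset.sum_boole, card_filter_inter_empty]

lemma sum_indicator_nonempty {k r : ℕ} (W : Finset (Fin k)) :
    ∑ S ∈ Finset.powersetCard r (Finset.univ : Finset (Fin k)),
        (if (S ∩ W).Nonempty then (1 : ℝ) else 0)
      = (k.choose r : ℝ) - ((k - W.card).choose r : ℝ) := by
  have h : ∀ S : Finset (Fin k), (if (S ∩ W).Nonempty then (1 : ℝ) else 0)
      = 1 - (if S ∩ W = ∅ then (1 : ℝ) else 0) := by
    intro S
    by_cases hS : S ∩ W = ∅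
    · simp [hS]
    · simp [hS, Finset.nonempty_iff_ne_empty.2 hS]
  rw [Finset.sum_congr rfl (fun S _ => h S), Finset.sum_sub_distrib, sum_indicator_empty]
  simp [Finset.card_powersetCard]

lemma sum_indicator_pair {k r : ℕ} {W1 W2 : Finset (Fin k)} (hd : Disjoint W1 W2) :
    ∑ S ∈ Finset.powersetCard r (Finset.univ : Finset (Fin k)),
        (if (S ∩ W1).Nonempty then (1 : ℝ) else 0) * (if (S ∩ W2).Nonempty then (1 : ℝ) else 0)
      = (k.choose r : ℝ) - ((k - W1.card).choose r : ℝ) - ((k - W2.card).choose r : ℝ)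
        + ((k - (W1.card + W2.card)).choose r : ℝ) := by
  have h : ∀ S : Finset (Fin k),
      (if (S ∩ W1).Nonempty then (1 : ℝ) else 0) * (if (S ∩ W2).Nonempty then (1 : ℝ) else 0)
      = 1 - (if S ∩ W1 = ∅ then (1 : ℝ) else 0) - (if S ∩ W2 = ∅ then (1 : ℝ) else 0)
        + (if S ∩ (W1 ∪ W2) = ∅ then (1 : ℝ) else 0) := by
    intro S
    have hu : S ∩ (W1 ∪ W2) = ∅ ↔ (S ∩ W1 = ∅ ∧ S ∩ W2 = ∅) := by
      rw [Finset.inter_union_distrib_left, Finset.union_eq_empty]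
    by_cases h1 : S ∩ W1 = ∅ <;> by_cases h2 : S ∩ W2 = ∅ <;>
      simp [h1, h2, hu, Finset.nonempty_iff_ne_empty]
  rw [Finset.sum_congr rfl (fun S _ => h S)]
  rw [Finset.sum_add_distrib, Finset.sum_sub_distrib, Finset.sum_sub_distrib,
    sum_indicator_empty, sum_indicator_empty, sum_indicator_empty]
  rw [Finset.card_union_of_disjoint hd]
  simp [Finset.card_powersetCard]

lemma sum_piFinset_cons {A : Type*} [DecidableEq A] (s : Finset A) (T : ℕ)
    (h : (Fin (T + 1) → A) → ℝ) :
    ∑ ω ∈ Fintype.piFinset (fun _ : Fin (T + 1) => s), h ω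
      = ∑ S ∈ s, ∑ g ∈ Fintype.piFinset (fun _ : Fin T => s), h (Fin.cons S g) := by
  have e1 : ∑ Sg ∈ s ×ˢ Fintype.piFinset (fun _ : Fin T => s), h (Fin.cons Sg.1 Sg.2)
      = ∑ S ∈ s, ∑ g ∈ Fintype.piFinset (fun _ : Fin T => s), h (Fin.cons S g) :=
    Finset.sum_product _ _ _
  rw [← e1]
  refine Finset.sum_nbij' (fun ω => (ω 0, Fin.tail ω)) (fun Sg => Fin.cons Sg.1 Sg.2) ?_ ?_ ?_ ?_ ?_
  · intro ω hω
    rw [Fintype.mem_piFinset] at hω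
    rw [Finset.mem_product]
    exact ⟨hω 0, by rw [Fintype.mem_piFinset]; intro i; exact hω i.succ⟩
  · rintro ⟨S, g⟩ hSg
    rw [Finset.mem_product] at hSg
    rw [Fintype.mem_piFinset]
    intro i
    refine Fin.cases ?_ ?_ i
    · simpa using hSg.1
    · intro j; simpa using (Fintype.mem_piFinset.1 hSg.2) j
  · intro ω _; exact Fin.cons_self_tail ω
  · rintro ⟨S, g⟩ _; simp [Fin.tail_cons]
  · intro ω _; rw [Fin.cons_self_tail]

lemma gradient_const_mul_sum {d n : ℕ} (a : ℝ) (f : Fin n → EuclideanSpace ℝ (Fin d) → ℝ)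
    (hdiff : ∀ i, Differentiable ℝ (f i)) (x : EuclideanSpace ℝ (Fin d)) :
    gradient (fun y => a * ∑ i, f i y) x = a • ∑ i, gradient (f i) x := by
  have h1 : ∀ i, HasFDerivAt (f i)
      ((InnerProductSpace.toDual ℝ _) (gradient (f i) x)) x :=
    fun i => hasGradientAt_iff_hasFDerivAt.mp (hdiff i x).hasGradientAt
  have h2 : HasFDerivAt (fun y => a * ∑ i, f i y)
      (a • ∑ i, (InnerProductSpace.toDual ℝ _) (gradient (f i) x)) x :=
    (HasFDerivAt.fun_sum (fun i _ => h1 i)).const_mul a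
  have h3 : HasGradientAt (fun y => a * ∑ i, f i y) (a • ∑ i, gradient (f i) x) x := by
    rw [hasGradientAt_iff_hasFDerivAt, map_smul, map_sum]
    exact h2
  exact h3.gradient
lemma traj_ext_succ {k : ℕ} {E : Type*} (x : E) (upd : Finset (Fin k) → E → E) (t : ℕ)
    (S : Finset (Fin k)) (g : Fin t → Finset (Fin k)) :
    traj x upd (fun s => if h : s < t + 1 then (Fin.cons S g : Fin (t+1) → Finset (Fin k)) ⟨s, h⟩ else ∅) (t + 1)
      = traj (upd S x) upd (fun s => if h : s < t then g ⟨s, h⟩ else ∅) t := by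
  rw [traj_shift]
  have h0 : (0:ℕ) < t + 1 := Nat.succ_pos t
  simp only [dif_pos h0]
  have hc0 : Fin.cons (α := fun _ => Finset (Fin k)) S g ⟨0, h0⟩ = S := by simp
  rw [hc0]
  refine traj_congr _ _ fun s hs => ?_
  simp only [dif_pos (Nat.succ_lt_succ hs), dif_pos hs]
  exact Fin.cons_succ (α := fun _ => Finset (Fin k)) S g ⟨s, hs⟩

set_option maxHeartbeats 1600000

/-- Convergence of ErasureHead (FRC(n,k,c) approximate-gradient-coded gradient descent) with
step size `γ = (1-p)/β` on a `β`-smooth, `μ`-PL function: `Δ_T ≤ (1-(1-p)μ/β)^T Δ_0 +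
(q-p)cσ²/(2(1-p)μn)`. -/
theorem erasurehead_convergence_step_one_sub_p_over_beta
    {d n k c r ℓ T : ℕ} (hn : 0 < n) (hc : c ∣ n)
    (hr : r ≤ k) (hℓ : ℓ = k * c / n) (h2ℓ : 2 * ℓ ≤ k)
    (W : Fin (n / c) → Finset (Fin k))
    (hWcard : ∀ i, (W i).card = ℓ)
    (hWdisj : ∀ i j, i ≠ j → Disjoint (W i) (W j))
    (f : Fin n → EuclideanSpace ℝ (Fin d) → ℝ)
    (hdiff : ∀ i, Differentiable ℝ (f i))
    (σ β μ fstar : ℝ) (hμ : 0 < μ) (hβμ : μ ≤ β)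
    (hσ : ∀ i x, ‖gradient (f i) x‖ ≤ σ)
    (F : EuclideanSpace ℝ (Fin d) → ℝ)
    (hF : F = fun y => (1 / (n : ℝ)) * ∑ i, f i y)
    (hsmooth : ∀ x y, F y ≤ F x + inner ℝ (gradient F x) (y - x) + (β / 2) * ‖y - x‖ ^ 2)
    (hmin : ∀ x, fstar ≤ F x) (hattain : ∃ x, F x = fstar)
    (hPL : ∀ x, μ * (F x - fstar) ≤ (1 / 2) * ‖gradient F x‖ ^ 2)
    (p q : ℝ)
    (hp : p = ((k - ℓ).choose r : ℝ) / (k.choose r : ℝ))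
    (hq : q = (2 * ((k - ℓ).choose r : ℝ) - ((k - 2 * ℓ).choose r : ℝ)) / (k.choose r : ℝ))
    (hp1 : p < 1)
    (x0 : EuclideanSpace ℝ (Fin d))
    (X : (ℕ → Finset (Fin k)) → ℕ → EuclideanSpace ℝ (Fin d))
    (hX : X = fun ω => traj x0 (fun S x => x - ((1 - p) / β) • ((1 - p)⁻¹ •
        ((1 / (n : ℝ)) • ∑ i : Fin (n / c),
          (if (S ∩ W i).Nonempty then (1 : ℝ) else 0) •
            ∑ j : Fin c, gradient (f (taskIdx n c hc i j)) x)) ) ω)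
    (ΔT : ℝ)
    (hΔT : ΔT = (∑ ω ∈ Fintype.piFinset
          (fun _ : Fin T => Finset.powersetCard r (Finset.univ : Finset (Fin k))),
        (F (X (fun t => if h : t < T then ω ⟨t, h⟩ else ∅) T) - fstar))
      / ((k.choose r : ℝ)) ^ T) :
    ΔT ≤ (1 - (1 - p) * μ / β) ^ T * (F x0 - fstar)
      + (q - p) * c * σ ^ 2 / (2 * (1 - p) * μ * n) := by
  classical
  have hc0 : 0 < c := Nat.pos_of_dvd_of_pos hc hn
  have hβ : (0:ℝ) < β := lt_of_lt_of_le hμ hβμ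
  have hn' : (0:ℝ) < (n:ℝ) := by exact_mod_cast hn
  have hNpos : (0:ℝ) < (k.choose r : ℝ) := by exact_mod_cast Nat.choose_pos hr
  have hNne : (k.choose r : ℝ) ≠ 0 := hNpos.ne'
  have hp0 : 0 ≤ p := by rw [hp]; positivity
  have h1p : (0:ℝ) < 1 - p := by linarith
  have hpN : ((k - ℓ).choose r : ℝ) = (k.choose r : ℝ) * p := by
    rw [hp]; field_simp
  have hqN : 2 * ((k - ℓ).choose r : ℝ) - ((k - 2 * ℓ).choose r : ℝ)
      = (k.choose r : ℝ) * q := by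
    rw [hq]; field_simp
  have hqp : p ≤ q := by
    have hle : ((k - 2 * ℓ).choose r : ℝ) ≤ ((k - ℓ).choose r : ℝ) := by
      exact_mod_cast Nat.choose_le_choose r (by omega)
    have h1 : (k.choose r : ℝ) * p ≤ (k.choose r : ℝ) * q := by linarith
    exact le_of_mul_le_mul_left h1 hNpos
  have hσ0 : (0:ℝ) ≤ σ := le_trans (norm_nonneg _) (hσ ⟨0, hn⟩ x0)
  have hρ0 : (0:ℝ) ≤ 1 - (1 - p) * μ / β := by
    rw [sub_nonneg, div_le_one hβ]; nlinarith
  have hρ1 : 1 - (1 - p) * μ / β < 1 := by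
    have h1 : 0 < (1 - p) * μ / β := by positivity
    linarith
  subst hX
  set N : ℝ := (k.choose r : ℝ) with hNdef
  set ρ : ℝ := 1 - (1 - p) * μ / β with hρdef
  set B0 : ℝ := (q - p) * c * σ ^ 2 / (2 * β * (n:ℝ)) with hB0def
  have hB00 : 0 ≤ B0 := by
    rw [hB0def]
    apply div_nonneg _ (by positivity)
    exact mul_nonneg (mul_nonneg (sub_nonneg.2 hqp) (by positivity)) (sq_nonneg σ)
  set v : EuclideanSpace ℝ (Fin d) → Fin (n / c) → EuclideanSpace ℝ (Fin d) :=
    fun x i => ∑ j : Fin c, gradient (f (taskIdx n c hc i j)) x with hv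
  set u : Finset (Fin k) → EuclideanSpace ℝ (Fin d) → EuclideanSpace ℝ (Fin d) :=
    fun S x => ∑ i : Fin (n / c), (if (S ∩ W i).Nonempty then (1:ℝ) else 0) • v x i with hu
  set upd : Finset (Fin k) → EuclideanSpace ℝ (Fin d) → EuclideanSpace ℝ (Fin d) :=
    fun S x => x - (1 / (β * (n:ℝ))) • u S x with hupd
  have hsc : ((1 - p) / β) * ((1 - p)⁻¹ * (1 / (n:ℝ))) = 1 / (β * (n:ℝ)) := by
    field_simp
  have hXupd : (fun (S : Finset (Fin k)) (x : EuclideanSpace ℝ (Fin d)) =>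
      x - ((1 - p) / β) • ((1 - p)⁻¹ • ((1 / (n : ℝ)) • ∑ i : Fin (n / c),
        (if (S ∩ W i).Nonempty then (1 : ℝ) else 0) •
          ∑ j : Fin c, gradient (f (taskIdx n c hc i j)) x))) = upd := by
    funext S x
    simp only [hupd, hu, hv, smul_smul, hsc]
  rw [hXupd] at hΔT
  set D𝒮 := Finset.powersetCard r (Finset.univ : Finset (Fin k)) with h𝒮
  have hcard : ((D𝒮.card : ℕ) : ℝ) = N := by
    rw [h𝒮, Finset.card_powersetCard, Finset.card_univ, Fintype.card_fin, hNdef]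
  have hGrad : ∀ x, gradient F x = (1 / (n:ℝ)) • ∑ i : Fin (n / c), v x i := by
    intro x
    rw [hF, gradient_const_mul_sum (1 / (n:ℝ)) f hdiff x]
    congr 1
    exact (sum_taskIdx hn hc fun m => gradient (f m) x).symm
  -- the one-step estimate
  have hstep : ∀ x : EuclideanSpace ℝ (Fin d),
      ∑ S ∈ D𝒮, (F (upd S x) - fstar) ≤ N * (ρ * (F x - fstar) + B0) := by
    intro x
    have hSv : ∑ i : Fin (n / c), v x i = (n:ℝ) • gradient F x := by
      rw [hGrad x, smul_smul, mul_one_div, div_self hn'.ne', one_smul]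
    have hip : (inner ℝ (gradient F x) (∑ i : Fin (n / c), v x i) : ℝ)
        = (n:ℝ) * ‖gradient F x‖ ^ 2 := by
      rw [hSv, real_inner_smul_right, real_inner_self_eq_norm_sq]
    have hg2 : ‖∑ i : Fin (n / c), v x i‖ ^ 2 = (n:ℝ)^2 * ‖gradient F x‖ ^ 2 := by
      rw [hSv, norm_smul, Real.norm_eq_abs, abs_of_nonneg hn'.le]; ring
    have hsum_ind : ∀ i, ∑ S ∈ D𝒮, (if (S ∩ W i).Nonempty then (1:ℝ) else 0)
        = N * (1 - p) := by
      intro i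
      rw [h𝒮, sum_indicator_nonempty, hWcard i, hpN, hNdef]; ring
    have hsum_pair : ∀ i i', i ≠ i' →
        ∑ S ∈ D𝒮, (if (S ∩ W i).Nonempty then (1:ℝ) else 0)
          * (if (S ∩ W i').Nonempty then (1:ℝ) else 0)
        = N * (1 - q) := by
      intro i i' hne
      rw [h𝒮, sum_indicator_pair (hWdisj i i' hne), hWcard, hWcard]
      have h2 : ℓ + ℓ = 2 * ℓ := by omega
      rw [h2, hNdef]
      linarith
    have hdiag : ∀ i : Fin (n / c), ∑ S ∈ D𝒮, (if (S ∩ W i).Nonempty then (1:ℝ) else 0)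
        * (if (S ∩ W i).Nonempty then (1:ℝ) else 0) = N * (1 - p) := by
      intro i
      have hsq : ∀ S : Finset (Fin k), (if (S ∩ W i).Nonempty then (1:ℝ) else 0)
          * (if (S ∩ W i).Nonempty then (1:ℝ) else 0)
          = (if (S ∩ W i).Nonempty then (1:ℝ) else 0) := by
        intro S; by_cases hS : (S ∩ W i).Nonempty <;> simp [hS]
      rw [Finset.sum_congr rfl fun S _ => hsq S, hsum_ind i]
    have hsum_u : ∑ S ∈ D𝒮, u S x = (N * (1 - p)) • ∑ i : Fin (n / c), v x i := by
      calc ∑ S ∈ D𝒮, u S x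
          = ∑ i : Fin (n / c), ∑ S ∈ D𝒮,
              (if (S ∩ W i).Nonempty then (1:ℝ) else 0) • v x i := by
            simp only [hu]; exact Finset.sum_comm
        _ = ∑ i : Fin (n / c), (N * (1 - p)) • v x i := by
            refine Finset.sum_congr rfl fun i _ => ?_
            rw [← Finset.sum_smul, hsum_ind i]
        _ = (N * (1 - p)) • ∑ i : Fin (n / c), v x i := Finset.smul_sum.symm
    have hinner2 : ∑ i : Fin (n / c), ∑ i' : Fin (n / c), (inner ℝ (v x i) (v x i') : ℝ)
        = ‖∑ i : Fin (n / c), v x i‖ ^ 2 := by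
      rw [← real_inner_self_eq_norm_sq, sum_inner]
      exact Finset.sum_congr rfl fun i _ => (inner_sum _ _ _).symm
    have hsum_usq : ∑ S ∈ D𝒮, ‖u S x‖ ^ 2
        = N * (1 - q) * ‖∑ i : Fin (n / c), v x i‖ ^ 2
          + N * (q - p) * ∑ i : Fin (n / c), ‖v x i‖ ^ 2 := by
      have expand : ∀ S : Finset (Fin k), ‖u S x‖ ^ 2 = ∑ i : Fin (n / c), ∑ i' : Fin (n / c),
          ((if (S ∩ W i).Nonempty then (1:ℝ) else 0)
            * (if (S ∩ W i').Nonempty then (1:ℝ) else 0))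
            * (inner ℝ (v x i) (v x i') : ℝ) := by
        intro S
        rw [← real_inner_self_eq_norm_sq]
        simp only [hu]
        rw [sum_inner]
        refine Finset.sum_congr rfl fun i _ => ?_
        rw [inner_sum]
        refine Finset.sum_congr rfl fun i' _ => ?_
        rw [real_inner_smul_left, real_inner_smul_right]; ring
      calc ∑ S ∈ D𝒮, ‖u S x‖ ^ 2
          = ∑ i : Fin (n / c), ∑ i' : Fin (n / c),
              (∑ S ∈ D𝒮, (if (S ∩ W i).Nonempty then (1:ℝ) else 0)
                * (if (S ∩ W i').Nonempty then (1:ℝ) else 0))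
                * (inner ℝ (v x i) (v x i') : ℝ) := by
            rw [Finset.sum_congr rfl fun S _ => expand S, Finset.sum_comm]
            refine Finset.sum_congr rfl fun i _ => ?_
            rw [Finset.sum_comm]
            refine Finset.sum_congr rfl fun i' _ => ?_
            rw [Finset.sum_mul]
        _ = ∑ i : Fin (n / c), ∑ i' : Fin (n / c),
              (N * (1 - q) * (inner ℝ (v x i) (v x i') : ℝ)
               + (if i = i' then N * (q - p) * ‖v x i‖ ^ 2 else 0)) := by
            refine Finset.sum_congr rfl fun i _ => Finset.sum_congr rfl fun i' _ => ?_
            by_cases hii : i = i'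
            · subst hii
              rw [hdiag i, if_pos rfl, real_inner_self_eq_norm_sq]
              ring
            · rw [hsum_pair i i' hii, if_neg hii]
              ring
        _ = N * (1 - q) * ‖∑ i : Fin (n / c), v x i‖ ^ 2
              + N * (q - p) * ∑ i : Fin (n / c), ‖v x i‖ ^ 2 := by
            simp only [Finset.sum_add_distrib, Finset.sum_ite_eq, Finset.mem_univ, if_true,
              ← Finset.mul_sum]
            rw [hinner2]
    have hSvv_le : ∑ i : Fin (n / c), ‖v x i‖ ^ 2 ≤ (n:ℝ) * c * σ ^ 2 := by
      have hone : ∀ i, ‖v x i‖ ≤ (c:ℝ) * σ := by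
        intro i
        simp only [hv]
        refine le_trans (norm_sum_le _ _) ?_
        calc ∑ j : Fin c, ‖gradient (f (taskIdx n c hc i j)) x‖
            ≤ ∑ _j : Fin c, σ := Finset.sum_le_sum fun j _ => hσ _ x
          _ = (c:ℝ) * σ := by simp [Finset.sum_const, mul_comm]
      have hsq : ∀ i, ‖v x i‖ ^ 2 ≤ ((c:ℝ) * σ) ^ 2 := fun i => by
        nlinarith [hone i, norm_nonneg (v x i)]
      calc ∑ i : Fin (n / c), ‖v x i‖ ^ 2
          ≤ ∑ _i : Fin (n / c), ((c:ℝ) * σ) ^ 2 := Finset.sum_le_sum fun i _ => hsq i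
        _ = ((n / c : ℕ):ℝ) * ((c:ℝ) * σ) ^ 2 := by
            simp [Finset.sum_const, mul_comm]
        _ = (n:ℝ) * c * σ ^ 2 := by
            have hnc : ((n / c : ℕ):ℝ) * (c:ℝ) = (n:ℝ) := by
              exact_mod_cast Nat.div_mul_cancel hc
            calc ((n / c : ℕ):ℝ) * ((c:ℝ) * σ) ^ 2
                = (((n / c : ℕ):ℝ) * (c:ℝ)) * ((c:ℝ) * σ ^ 2) := by ring
              _ = (n:ℝ) * c * σ ^ 2 := by rw [hnc]; ring
    have hSvv0 : 0 ≤ ∑ i : Fin (n / c), ‖v x i‖ ^ 2 :=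
      Finset.sum_nonneg fun i _ => sq_nonneg _
    have hD0 : 0 ≤ F x - fstar := by linarith [hmin x]
    have hPLx := hPL x
    have hbound : ∀ S ∈ D𝒮, F (upd S x) - fstar
        ≤ F x - fstar - (1 / (β * (n:ℝ))) * (inner ℝ (gradient F x) (u S x) : ℝ)
          + (β / 2) * ((1 / (β * (n:ℝ))) ^ 2 * ‖u S x‖ ^ 2) := by
      intro S _
      have h := hsmooth x (upd S x)
      have hyx : upd S x - x = -((1 / (β * (n:ℝ))) • u S x) := by
        simp only [hupd]; abel
      rw [hyx, inner_neg_right, norm_neg, norm_smul, real_inner_smul_right,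
        Real.norm_eq_abs, abs_of_nonneg (by positivity : (0:ℝ) ≤ 1 / (β * (n:ℝ))),
        mul_pow] at h
      linarith
    calc ∑ S ∈ D𝒮, (F (upd S x) - fstar)
        ≤ ∑ S ∈ D𝒮, (F x - fstar
            - (1 / (β * (n:ℝ))) * (inner ℝ (gradient F x) (u S x) : ℝ)
            + (β / 2) * ((1 / (β * (n:ℝ))) ^ 2 * ‖u S x‖ ^ 2)) :=
          Finset.sum_le_sum hbound
      _ = N * (F x - fstar)
            - (1 / (β * (n:ℝ))) * (inner ℝ (gradient F x) (∑ S ∈ D𝒮, u S x) : ℝ)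
            + (β / 2) * ((1 / (β * (n:ℝ))) ^ 2 * ∑ S ∈ D𝒮, ‖u S x‖ ^ 2) := by
          rw [Finset.sum_add_distrib, Finset.sum_sub_distrib, Finset.sum_const,
            nsmul_eq_mul, hcard, ← Finset.mul_sum, ← Finset.mul_sum, ← Finset.mul_sum,
            inner_sum]
      _ = N * (F x - fstar)
            - (1 / (β * (n:ℝ))) * (N * (1 - p) * ((n:ℝ) * ‖gradient F x‖ ^ 2))
            + (β / 2) * ((1 / (β * (n:ℝ))) ^ 2
                * (N * (1 - q) * ((n:ℝ)^2 * ‖gradient F x‖ ^ 2)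
                  + N * (q - p) * ∑ i : Fin (n / c), ‖v x i‖ ^ 2)) := by
          rw [hsum_u, real_inner_smul_right, hip, hsum_usq, hg2]
      _ ≤ N * (ρ * (F x - fstar) + B0) := by
          rw [← mul_le_mul_iff_right₀ (show (0:ℝ) < 2 * β * (n:ℝ)^2 by positivity)]
          have hL : 2 * β * (n:ℝ)^2 * (N * (F x - fstar)
              - (1 / (β * (n:ℝ))) * (N * (1 - p) * ((n:ℝ) * ‖gradient F x‖ ^ 2))
              + (β / 2) * ((1 / (β * (n:ℝ))) ^ 2
                  * (N * (1 - q) * ((n:ℝ)^2 * ‖gradient F x‖ ^ 2)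
                    + N * (q - p) * ∑ i : Fin (n / c), ‖v x i‖ ^ 2)))
              = 2 * β * (n:ℝ)^2 * N * (F x - fstar)
                - 2 * (n:ℝ)^2 * N * (1 - p) * ‖gradient F x‖ ^ 2
                + (n:ℝ)^2 * N * (1 - q) * ‖gradient F x‖ ^ 2
                + N * (q - p) * ∑ i : Fin (n / c), ‖v x i‖ ^ 2 := by
            field_simp
            ring
          have hR : 2 * β * (n:ℝ)^2 * (N * (ρ * (F x - fstar) + B0))
              = 2 * β * (n:ℝ)^2 * N * (F x - fstar)
                - 2 * (n:ℝ)^2 * N * (1 - p) * μ * (F x - fstar)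
                + (n:ℝ) * N * ((q - p) * c * σ ^ 2) := by
            rw [hρdef, hB0def]
            field_simp
          rw [hL, hR]
          nlinarith [mul_nonneg (mul_nonneg hNpos.le (sub_nonneg.2 hqp))
              (sub_nonneg.2 hSvv_le),
            mul_nonneg (mul_nonneg (mul_nonneg hNpos.le (sub_nonneg.2 hqp))
              (sq_nonneg (n:ℝ))) (sq_nonneg ‖gradient F x‖),
            mul_nonneg (mul_nonneg (mul_nonneg hNpos.le h1p.le) (sq_nonneg (n:ℝ)))
              (by linarith : (0:ℝ) ≤ ‖gradient F x‖ ^ 2 - 2 * μ * (F x - fstar))]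
  -- iterate the one-step estimate
  have main : ∀ (t : ℕ) (x : EuclideanSpace ℝ (Fin d)),
      ∑ ω ∈ Fintype.piFinset (fun _ : Fin t => D𝒮),
          (F (traj x upd (fun s => if h : s < t then ω ⟨s, h⟩ else ∅) t) - fstar)
        ≤ N ^ t * (ρ ^ t * (F x - fstar) + B0 * ∑ i ∈ Finset.range t, ρ ^ i) := by
    intro t
    induction t with
    | zero =>
        intro x
        simp [traj]
    | succ t ih =>
        intro x
        rw [sum_piFinset_cons]
        simp only [traj_ext_succ]
        refine le_trans (Finset.sum_le_sum fun S _ => ih (upd S x)) ?_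
        have hrw : ∑ S ∈ D𝒮, (N ^ t * (ρ ^ t * (F (upd S x) - fstar)
              + B0 * ∑ i ∈ Finset.range t, ρ ^ i))
            = (N ^ t * ρ ^ t) * (∑ S ∈ D𝒮, (F (upd S x) - fstar))
              + N * (N ^ t * (B0 * ∑ i ∈ Finset.range t, ρ ^ i)) := by
          simp only [mul_add, Finset.sum_add_distrib, ← Finset.mul_sum, Finset.sum_const,
            nsmul_eq_mul, hcard]
          ring
        rw [hrw]
        have hc2 : (0:ℝ) ≤ N ^ t * ρ ^ t :=
          mul_nonneg (pow_nonneg hNpos.le t) (pow_nonneg hρ0 t)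
        calc (N ^ t * ρ ^ t) * (∑ S ∈ D𝒮, (F (upd S x) - fstar))
              + N * (N ^ t * (B0 * ∑ i ∈ Finset.range t, ρ ^ i))
            ≤ (N ^ t * ρ ^ t) * (N * (ρ * (F x - fstar) + B0))
              + N * (N ^ t * (B0 * ∑ i ∈ Finset.range t, ρ ^ i)) :=
            add_le_add_left (mul_le_mul_of_nonneg_left (hstep x) hc2) _
          _ = N ^ (t+1) * (ρ ^ (t+1) * (F x - fstar)
                + B0 * ∑ i ∈ Finset.range (t+1), ρ ^ i) := by
            rw [Finset.sum_range_succ]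
            ring
  -- conclude
  rw [hΔT, div_le_iff₀ (by positivity : (0:ℝ) < N ^ T)]
  refine le_trans (main T x0) ?_
  rw [mul_comm (N ^ T)]
  refine mul_le_mul_of_nonneg_right ?_ (pow_nonneg hNpos.le T)
  have h1ρeq : 1 - ρ = (1 - p) * μ / β := by rw [hρdef]; ring
  have h1ρ : 0 < 1 - ρ := by rw [h1ρeq]; positivity
  have hR : ∑ i ∈ Finset.range T, ρ ^ i ≤ 1 / (1 - ρ) := by
    rw [geom_sum_eq (by linarith : ρ ≠ 1) T]
    have heq : (ρ ^ T - 1) / (ρ - 1) = (1 - ρ ^ T) / (1 - ρ) := by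
      rw [div_eq_div_iff (by linarith) (by linarith)]
      ring
    rw [heq]
    rw [div_le_div_iff₀ h1ρ h1ρ]
    nlinarith [pow_nonneg hρ0 T]
  have hB0R : B0 * ∑ i ∈ Finset.range T, ρ ^ i
      ≤ (q - p) * c * σ ^ 2 / (2 * (1 - p) * μ * n) := by
    calc B0 * ∑ i ∈ Finset.range T, ρ ^ i ≤ B0 * (1 / (1 - ρ)) :=
          mul_le_mul_of_nonneg_left hR hB00
      _ = (q - p) * c * σ ^ 2 / (2 * (1 - p) * μ * n) := by
          rw [h1ρeq, hB0def]
          field_simp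
  linarith
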